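/- The function Q(r) sin θ is a first integral of the planar system ṙ = F(r) cos θ, θ̇ = G(r) sin θ on (0,1) × ℝ: along any C¹ solution (r(t), θ(t)), the quantity Q(r(t)) sin θ(t) is constant. -/

import Mathlib

open Real

/-- `Q(r) sin θ` is a first integral of the reduced planar system
`ṙ = F(r) cos θ`, `θ̇ = G(r) sin θ` on `(0,1) × ℝ`. -/
theorem Q_sin_first_integral (p q : ℝ) (hp : 1 < p) (hq : q = p / (p - 1))
    (F G Q : ℝ → ℝ)
    (hF : ∀ r, F r = (p * r) ^ (1/q) * (q * (1 - r)) ^ (1/p))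
    (hG : ∀ r ∈ Set.Ioo (0:ℝ) 1,
      G r = p ^ (1/q) * q ^ (1/p) * (r - 1/p) / (r ^ (1/p) * (1 - r) ^ (1/q)))
    (hQ : ∀ r, Q r = (p * r) ^ (1/p) * (q * (1 - r)) ^ (1/q))
    (r θ : ℝ → ℝ)
    (hr01 : ∀ t, r t ∈ Set.Ioo (0:ℝ) 1)
    (hr : ∀ t, HasDerivAt r (F (r t) * Real.cos (θ t)) t)
    (hθ : ∀ t, HasDerivAt θ (G (r t) * Real.sin (θ t)) t) :
    ∀ t s : ℝ, Q (r t) * Real.sin (θ t) = Q (r s) * Real.sin (θ s) := by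
  have hp0 : (0:ℝ) < p := lt_trans one_pos hp
  have hp1 : (0:ℝ) < p - 1 := sub_pos.mpr hp
  have hq0 : (0:ℝ) < q := by rw [hq]; positivity
  have hsum : 1/q + 1/p = 1 := by
    rw [hq]; field_simp; ring
  have hpq : p * q = p + q := by
    rw [hq]; field_simp; ring
  have key : ∀ u : ℝ, HasDerivAt (fun t => Q (r t) * Real.sin (θ t)) 0 u := by
    intro u
    obtain ⟨hR0, hR1⟩ := hr01 u
    have h1R : (0:ℝ) < 1 - r u := by linarith
    have haR : (0:ℝ) < p * r u := mul_pos hp0 hR0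
    have hbR : (0:ℝ) < q * (1 - r u) := mul_pos hq0 h1R
    have hu1 : HasDerivAt (fun t => p * r t) (p * (F (r u) * Real.cos (θ u))) u :=
      (hr u).const_mul p
    have hu2 : HasDerivAt (fun t => q * (1 - r t)) (q * (-(F (r u) * Real.cos (θ u)))) u := by
      have h := ((hasDerivAt_const u (1:ℝ)).sub (hr u)).const_mul q
      simpa using h
    have ha : HasDerivAt (fun t => (p * r t) ^ (1/p))
        ((p * (F (r u) * Real.cos (θ u))) * (1/p) * (p * r u) ^ (1/p - 1)) u :=
      hu1.rpow_const (Or.inl haR.ne')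
    have hb : HasDerivAt (fun t => (q * (1 - r t)) ^ (1/q))
        ((q * (-(F (r u) * Real.cos (θ u)))) * (1/q) * (q * (1 - r u)) ^ (1/q - 1)) u :=
      hu2.rpow_const (Or.inl hbR.ne')
    have hQr : HasDerivAt (fun t => Q (r t))
        ((p * (F (r u) * Real.cos (θ u))) * (1/p) * (p * r u) ^ (1/p - 1)
            * ((q * (1 - r u)) ^ (1/q))
          + ((p * r u) ^ (1/p)) *
            ((q * (-(F (r u) * Real.cos (θ u)))) * (1/q) * (q * (1 - r u)) ^ (1/q - 1))) u := by
      have h := ha.mul hb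
      simpa only [Pi.mul_def, ← hQ] using h
    have hsin : HasDerivAt (fun t => Real.sin (θ t))
        (Real.cos (θ u) * (G (r u) * Real.sin (θ u))) u := (hθ u).sin
    have htot := hQr.mul hsin
    have hzero :
        ((p * (F (r u) * Real.cos (θ u))) * (1/p) * (p * r u) ^ (1/p - 1)
            * ((q * (1 - r u)) ^ (1/q))
          + ((p * r u) ^ (1/p)) *
            ((q * (-(F (r u) * Real.cos (θ u)))) * (1/q) * (q * (1 - r u)) ^ (1/q - 1)))
          * Real.sin (θ u)
        + Q (r u) * (Real.cos (θ u) * (G (r u) * Real.sin (θ u))) = 0 := by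
      rw [hF (r u), hG (r u) ⟨hR0, hR1⟩, hQ (r u)]
      rw [Real.rpow_sub haR, Real.rpow_one, Real.rpow_sub hbR, Real.rpow_one]
      have hAne : ((p * r u) ^ (1/p)) ≠ 0 := (Real.rpow_pos_of_pos haR _).ne'
      have hBne : ((q * (1 - r u)) ^ (1/q)) ≠ 0 := (Real.rpow_pos_of_pos hbR _).ne'
      have hρne : ((r u) ^ (1/p)) ≠ 0 := (Real.rpow_pos_of_pos hR0 _).ne'
      have hσne : ((1 - r u) ^ (1/q)) ≠ 0 := (Real.rpow_pos_of_pos h1R _).ne'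
      have e1 : (p * r u) ^ (1/q) = (p * r u) / (p * r u) ^ (1/p) := by
        rw [eq_div_iff hAne, ← Real.rpow_add haR, hsum, Real.rpow_one]
      have e2 : (q * (1 - r u)) ^ (1/p) = (q * (1 - r u)) / (q * (1 - r u)) ^ (1/q) := by
        rw [eq_div_iff hBne, ← Real.rpow_add hbR]
        rw [show 1/p + 1/q = 1 by linarith [hsum], Real.rpow_one]
      have e3 : p ^ (1/q) = p * (r u) ^ (1/p) / (p * r u) ^ (1/p) := by
        rw [eq_div_iff hAne, Real.mul_rpow hp0.le hR0.le, ← mul_assoc,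
          ← Real.rpow_add hp0, hsum, Real.rpow_one]
      have e4 : q ^ (1/p) = q * (1 - r u) ^ (1/q) / (q * (1 - r u)) ^ (1/q) := by
        rw [eq_div_iff hBne, Real.mul_rpow hq0.le h1R.le]
        rw [show q ^ (1/p) * (q ^ (1/q) * (1 - r u) ^ (1/q))
            = q ^ (1/p) * q ^ (1/q) * (1 - r u) ^ (1/q) by ring]
        rw [← Real.rpow_add hq0]
        rw [show 1/p + 1/q = 1 by linarith [hsum], Real.rpow_one]
      rw [e1, e2, e3, e4]
      field_simp
      linear_combination (Real.cos (θ u) * Real.sin (θ u) * r u) * hpq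
    rw [hzero] at htot
    exact htot
  intro t s
  have hdiff : Differentiable ℝ (fun t => Q (r t) * Real.sin (θ t)) :=
    fun u => (key u).differentiableAt
  exact is_const_of_deriv_eq_zero hdiff (fun u => (key u).deriv) t s
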